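/- Let p₁, p₂ ∈ ℍ² with d = dist(p₁,p₂) > 0 and r₁, r₂ ∈ (0,d), and let p₀ be on the segment p₁p₂ with cosh(dist(p₀,p₁))/cosh(r₁) = cosh(dist(p₀,p₂))/cosh(r₂). If q lies on the geodesic through p₁ and p₂ strictly on the same side of p₀ as p₁ (i.e., dist(q,p₀) > 0 and dist(q,p₁) < dist(p₀,p₁) or q is beyond p₁), then cosh(dist(q,p₁))/cosh(r₁) < cosh(dist(q,p₂))/cosh(r₂). -/
import Mathlib


open Real UpperHalfPlane

/-- A geodesic of the hyperbolic plane: an isometric embedding of `ℝ`. -/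
def IsGeodesic (γ : ℝ → UpperHalfPlane) : Prop :=
  ∀ s t : ℝ, dist (γ s) (γ t) = |s - t|

/-- On the geodesic through `p₁` and `p₂`, strictly on the same side of the balance
point `p₀` as `p₁`, the cosh-ratio inequality is strict. -/
theorem cosh_ratio_strict_on_p₁_side
    (p₁ p₂ : UpperHalfPlane) (r₁ r₂ : ℝ)
    (hd : 0 < dist p₁ p₂)
    (hr₁ : r₁ ∈ Set.Ioo 0 (dist p₁ p₂)) (hr₂ : r₂ ∈ Set.Ioo 0 (dist p₁ p₂))
    (γ : ℝ → UpperHalfPlane) (hγ : IsGeodesic γ)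
    (a b : ℝ) (ha : γ a = p₁) (hb : γ b = p₂) (hab : a < 0) (hb0 : 0 < b)
    (heq : Real.cosh (dist (γ 0) p₁) / Real.cosh r₁ =
      Real.cosh (dist (γ 0) p₂) / Real.cosh r₂)
    (t : ℝ) (ht : t < 0) :
    Real.cosh (dist (γ t) p₁) / Real.cosh r₁ <
      Real.cosh (dist (γ t) p₂) / Real.cosh r₂ := by
  have hc₁ : 0 < Real.cosh r₁ := Real.cosh_pos _
  have hc₂ : 0 < Real.cosh r₂ := Real.cosh_pos _
  rw [← ha, ← hb, hγ, hγ] at heq ⊢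
  rw [Real.cosh_abs, Real.cosh_abs] at heq ⊢
  rw [zero_sub, zero_sub, Real.cosh_neg, Real.cosh_neg] at heq
  rw [Real.cosh_sub, Real.cosh_sub]
  have hsa : Real.sinh a < 0 := Real.sinh_neg_iff.mpr hab
  have hsb : 0 < Real.sinh b := Real.sinh_pos_iff.mpr hb0
  have hst : Real.sinh t < 0 := Real.sinh_neg_iff.mpr ht
  have hca : 0 < Real.cosh a := Real.cosh_pos _
  have hcb : 0 < Real.cosh b := Real.cosh_pos _
  have key : Real.cosh a / Real.cosh r₁ = Real.cosh b / Real.cosh r₂ := heq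
  rw [div_eq_div_iff hc₁.ne' hc₂.ne'] at key
  rw [div_lt_div_iff₀ hc₁ hc₂]
  have key2 : Real.cosh t * (Real.cosh a * Real.cosh r₂) = Real.cosh t * (Real.cosh b * Real.cosh r₁) := by rw [key]
  nlinarith [mul_pos (mul_pos_of_neg_of_neg hst hsa) hc₂, mul_neg_of_neg_of_pos (mul_neg_of_neg_of_pos hst hsb) hc₁]
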